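/- Let {(z_{k−1}, x_k, g_k, x̂_k)}_{k≥0} be generated by the general subgradient-based method (either variant (a) or (b)) with weighted-average parameters λ_k := 1/‖g_k‖_* (assuming g_k ≠ 0) and β_k := β̂_k/(ρ√σ) for some ρ > 0, where β̂_{−1} := β̂_0 := 1 and β̂_{k+1} := β̂_k + 1/β̂_k. Then for all k ≥ 0, f(x̂_k) − f(x*) ≤ M_k (1/√σ)(l_d(z_k; x*)/ρ + ρ/2) · (0.5 + √(2k+1))/(k+1), where M_k := max_{0≤i≤k} ‖g_i‖_*; moreover, for all k ≥ −1 the points z_k, x_{k+1}, x̂_{k+1} lie in the set { x ∈ Q : ‖x − x*‖² ≤ (2 d(x*) + ρ²)/σ }. -/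

import Mathlib

lemma bhat_ge_one (bhat : ℕ → ℝ) (h1 : bhat 1 = 1)
    (hrec : ∀ n, 1 ≤ n → bhat (n + 1) = bhat n + (bhat n)⁻¹) :
    ∀ n, 1 ≤ bhat (n + 1) := by
  intro n
  induction n with
  | zero => rw [h1]
  | succ m ih =>
    rw [hrec (m + 1) (by omega)]
    have hp : 0 < bhat (m + 1) := by linarith
    have := inv_pos.mpr hp
    linarith

lemma bhat_sumInv (bhat : ℕ → ℝ) (h0 : bhat 0 = 1) (h1 : bhat 1 = 1)
    (hrec : ∀ n, 1 ≤ n → bhat (n + 1) = bhat n + (bhat n)⁻¹) :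
    ∀ k, ∑ n ∈ Finset.range (k + 1), (bhat n)⁻¹ = bhat (k + 1) := by
  intro k
  induction k with
  | zero => simp [h0, h1]
  | succ m ih => rw [Finset.sum_range_succ, ih, hrec (m + 1) (by omega)]

set_option maxHeartbeats 1600000 in
lemma bhat_bounds (bhat : ℕ → ℝ) (h0 : bhat 0 = 1) (h1 : bhat 1 = 1)
    (hrec : ∀ n, 1 ≤ n → bhat (n + 1) = bhat n + (bhat n)⁻¹) :
    ∀ k : ℕ, (2 * (k : ℝ) + 1) ≤ bhat (k + 1) ^ 2 ∧
      bhat (k + 1) ≤ 0.5 + Real.sqrt (2 * (k : ℝ) + 1) := by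
  intro k
  induction k with
  | zero =>
    constructor
    · rw [h1]; norm_num
    · rw [h1]; norm_num [Real.sqrt_one]
  | succ m ih =>
    obtain ⟨hl, hu⟩ := ih
    have hb1' : 1 ≤ bhat (m + 1) := bhat_ge_one bhat h1 hrec m
    have hrec' := hrec (m + 1) (by omega)
    have hmnn : (0 : ℝ) ≤ 2 * (m : ℝ) + 1 := by positivity
    have hs2 : Real.sqrt (2 * (m : ℝ) + 1) ^ 2 = 2 * (m : ℝ) + 1 := Real.sq_sqrt hmnn
    have hs1 : 1 ≤ Real.sqrt (2 * (m : ℝ) + 1) :=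
      (Real.le_sqrt (by norm_num) hmnn).mpr (by norm_num)
    set s := Real.sqrt (2 * (m : ℝ) + 1) with hs_def
    clear_value s
    have hr2 : Real.sqrt (2 * ((m : ℝ) + 1) + 1) ^ 2 = 2 * (m : ℝ) + 3 := by
      rw [Real.sq_sqrt (by positivity)]; ring
    have hr0 : 0 ≤ Real.sqrt (2 * ((m : ℝ) + 1) + 1) := Real.sqrt_nonneg _
    set r := Real.sqrt (2 * ((m : ℝ) + 1) + 1) with hr_def
    clear_value r
    have hbpos' : 0 < bhat (m + 1) := by linarith
    have hbinv : bhat (m + 1) * (bhat (m + 1))⁻¹ = 1 := mul_inv_cancel₀ hbpos'.ne'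
    constructor
    · push_cast
      rw [hrec']
      nlinarith [sq_nonneg ((bhat (m + 1))⁻¹), hl, hbinv]
    · push_cast
      rw [hrec']
      have hBpos : (0 : ℝ) < 0.5 + s := by linarith
      have hsb : s ≤ bhat (m + 1) := by
        rw [hs_def]
        have h := Real.sqrt_le_sqrt hl
        rwa [Real.sqrt_sq hbpos'.le] at h
      have hab : 0 ≤ bhat (m + 1) * (0.5 + s) - 1 := by nlinarith [hb1', hs1]
      have ha : 0 ≤ (0.5 + s) - bhat (m + 1) := by linarith
      have hstep1 : bhat (m + 1) + (bhat (m + 1))⁻¹ ≤ (0.5 + s) + (0.5 + s)⁻¹ := by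
        have hkey : ((0.5 + s) + (0.5 + s)⁻¹ - (bhat (m + 1) + (bhat (m + 1))⁻¹)) *
            (bhat (m + 1) * (0.5 + s))
            = ((0.5 + s) - bhat (m + 1)) * (bhat (m + 1) * (0.5 + s) - 1) := by
          field_simp
          ring
        nlinarith [hkey, mul_nonneg ha hab, mul_pos hbpos' hBpos]
      have hstep2 : (0.5 + s) + (0.5 + s)⁻¹ ≤ 0.5 + r := by
        have hrs : s ≤ r := by
          rw [hs_def, hr_def]
          exact Real.sqrt_le_sqrt (by linarith)
        have h2 : (r - s) * (r + s) = 2 := by linear_combination hr2 - hs2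
        have hr1s : r ≤ 1 + s := by
          have h5 : 2 * ((m : ℝ) + 1) + 1 ≤ (1 + s) ^ 2 := by nlinarith [hs2, hs1]
          have h6 := Real.sqrt_le_sqrt h5
          rw [Real.sqrt_sq (by linarith : (0:ℝ) ≤ 1 + s)] at h6
          rw [hr_def]
          exact h6
        have hra : 0 ≤ r - s := by linarith
        have hrb : r + s ≤ 1 + 2 * s := by linarith
        have h5 : (r - s) * (r + s) ≤ (r - s) * (1 + 2 * s) :=
          mul_le_mul_of_nonneg_left hrb hra
        have h3 : 1 ≤ (r - s) * (0.5 + s) := by nlinarith [h2, h5]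
        have h4 : (0.5 + s)⁻¹ ≤ r - s := by
          rw [inv_eq_one_div, div_le_iff₀ hBpos]
          linarith
        linarith
      linarith



set_option maxHeartbeats 1600000 in
/-- Corollary 4.2, weighted averages: with `λ_k = 1/‖g_k‖` and `β_k = β̂_k/(ρ√σ)`, the
general subgradient-based method (variant (a) or (b)) satisfies the stated estimate and
produces bounded iterates.  (Indices shifted: `z n`, `β n`, `bhat n`, `M n` stand for the
paper's `z_{n-1}`, `β_{n-1}`, `β̂_{n-1}`, `M_{n-1}`.) -/
theorem subgradient_method_weighted_averages
    {E : Type*} [NormedAddCommGroup E] [NormedSpace ℝ E] [FiniteDimensional ℝ E]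
    (Q : Set E) (hQne : Q.Nonempty) (hQcl : IsClosed Q) (hQcv : Convex ℝ Q)
    (f : E → ℝ) (hf_cv : ConvexOn ℝ Q f) (hf_lsc : LowerSemicontinuousOn f Q)
    (σ : ℝ) (hσ : 0 < σ)
    (d : E → ℝ) (d' : E → E →L[ℝ] ℝ)
    (hd_sc : StrongConvexOn Q σ d)
    (hd_diff : ∀ y ∈ Q, HasFDerivWithinAt d (d' y) Q y)
    (x₀ : E) (hx₀Q : x₀ ∈ Q) (hdx₀ : d x₀ = 0) (hd_nonneg : ∀ u ∈ Q, 0 ≤ d u)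
    (hBreg : ∀ w ∈ Q, ∀ u ∈ Q, σ / 2 * ‖u - w‖ ^ 2 ≤ d u - d w - d' w (u - w))
    (lam : ℕ → ℝ) (hlam : ∀ k, 0 < lam k)
    (β : ℕ → ℝ) (hβ0 : 0 < β 0) (hβmono : ∀ k, β k ≤ β (k + 1))
    (x : ℕ → E) (hxQ : ∀ k, x k ∈ Q)
    (ψ : ℕ → E → ℝ) (z : ℕ → E)
    (hzQ : ∀ n, z n ∈ Q) (hzmin : ∀ n, ∀ u ∈ Q, ψ n (z n) ≤ ψ n u)
    (g : ℕ → E →L[ℝ] ℝ) (hg : ∀ k, ∀ y : E, f (x k) + g k (y - x k) ≤ f y)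
    (hP1a : ψ 0 (z 0) = 0) (hP1b : z 0 = x₀)
    (hP2 : ∀ n : ℕ, ∀ u ∈ Q,
      ψ n (z n) + lam n * (f (x n) + g n (u - x n)) + β (n + 1) * d u
        - β n * (d (z n) + d' (z n) (u - z n)) ≤ ψ (n + 1) u)
    (hP3 : ∀ k : ℕ, ∀ u ∈ Q,
      ψ (k + 1) (z (k + 1)) ≤ (∑ i ∈ Finset.range (k + 1), lam i * (f (x i) + g i (u - x i)))
        + β (k + 1) * (d (z (k + 1)) + d' (z (k + 1)) (u - z (k + 1))))
    (xs : E) (hxsQ : xs ∈ Q) (hxs_opt : ∀ u ∈ Q, f xs ≤ f u)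
    (xhat : ℕ → E)
    (hmethod :
      ((∀ k, x k = z k) ∧
        (∀ k, xhat k = (∑ i ∈ Finset.range (k + 1), lam i)⁻¹ • ∑ i ∈ Finset.range (k + 1), lam i • x i))
      ∨ ((∀ k, x k = (∑ i ∈ Finset.range (k + 1), lam i)⁻¹ • ∑ i ∈ Finset.range (k + 1), lam i • z i) ∧
        (∀ k, xhat k = x k)))
    (ρ : ℝ) (hρ : 0 < ρ)
    (bhat : ℕ → ℝ) (hbhat0 : bhat 0 = 1) (hbhat1 : bhat 1 = 1)
    (hbhatrec : ∀ n, 1 ≤ n → bhat (n + 1) = bhat n + (bhat n)⁻¹)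
    (hgne : ∀ k, g k ≠ 0)
    (hlamw : ∀ k, lam k = ‖g k‖⁻¹) (hβ : ∀ n, β n = bhat n / (ρ * Real.sqrt σ))
    (M : ℕ → ℝ) (hM0 : M 0 = 0) (hMrec : ∀ n, M (n + 1) = max (M n) ‖g n‖) :
    (∀ k : ℕ, f (xhat k) - f xs ≤
      M (k + 1) * (1 / Real.sqrt σ) *
        ((d (z (k + 1)) + d' (z (k + 1)) (xs - z (k + 1))) / ρ + ρ / 2) *
        ((0.5 + Real.sqrt (2 * (k : ℝ) + 1)) / ((k : ℝ) + 1)))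
    ∧ (∀ n : ℕ,
      (z n ∈ Q ∧ ‖z n - xs‖ ^ 2 ≤ (2 * d xs + ρ ^ 2) / σ) ∧
      (x n ∈ Q ∧ ‖x n - xs‖ ^ 2 ≤ (2 * d xs + ρ ^ 2) / σ) ∧
      (xhat n ∈ Q ∧ ‖xhat n - xs‖ ^ 2 ≤ (2 * d xs + ρ ^ 2) / σ)) := by
  have hσs : 0 < Real.sqrt σ := Real.sqrt_pos.mpr hσ
  have hρσ : 0 < ρ * Real.sqrt σ := mul_pos hρ hσs
  -- basic facts about bhat
  have hb1 : ∀ n, 1 ≤ bhat (n + 1) := bhat_ge_one bhat hbhat1 hbhatrec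
  have hbpos : ∀ n, 0 < bhat n := by
    intro n
    cases n with
    | zero => rw [hbhat0]; norm_num
    | succ m => linarith [hb1 m]
  have hβpos : ∀ n, 0 < β n := fun n => by
    rw [hβ n]; exact div_pos (hbpos n) hρσ
  have hsumInv : ∀ k, ∑ n ∈ Finset.range (k + 1), (bhat n)⁻¹ = bhat (k + 1) :=
    bhat_sumInv bhat hbhat0 hbhat1 hbhatrec
  -- bounds for bhat
  have hbb : ∀ k : ℕ, (2 * (k : ℝ) + 1) ≤ bhat (k + 1) ^ 2 ∧
      bhat (k + 1) ≤ 0.5 + Real.sqrt (2 * (k : ℝ) + 1) :=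
    bhat_bounds bhat hbhat0 hbhat1 hbhatrec
  -- norms of subgradients
  have hgn : ∀ n, 0 < ‖g n‖ := fun n => norm_pos_iff.mpr (hgne n)
  -- facts about M
  have hMge : ∀ k i, i ≤ k → ‖g i‖ ≤ M (k + 1) := by
    intro k
    induction k with
    | zero =>
      intro i hi
      interval_cases i
      rw [hMrec 0]; exact le_max_right _ _
    | succ m ih =>
      intro i hi
      rcases Nat.eq_or_lt_of_le hi with h | h
      · rw [h, hMrec (m + 1)]; exact le_max_right _ _
      · exact le_trans (ih i (by omega)) (by rw [hMrec (m + 1)]; exact le_max_left _ _)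
  have hMpos : ∀ k, 0 < M (k + 1) := fun k =>
    lt_of_lt_of_le (hgn 0) (hMge k 0 (Nat.zero_le _))
  -- facts about S
  have hSpos : ∀ k, 0 < ∑ i ∈ Finset.range (k + 1), lam i := fun k =>
    Finset.sum_pos (fun i _ => hlam i) (by simp)
  have hSM : ∀ k : ℕ, ((k : ℝ) + 1) ≤ M (k + 1) * ∑ i ∈ Finset.range (k + 1), lam i := by
    intro k
    have h1 : ∀ i ∈ Finset.range (k + 1), (M (k + 1))⁻¹ ≤ lam i := by
      intro i hi
      rw [hlamw i]
      exact inv_anti₀ (hgn i) (hMge k i (Finset.mem_range_succ_iff.mp hi))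
    have h2 : ((k : ℝ) + 1) * (M (k + 1))⁻¹ ≤ ∑ i ∈ Finset.range (k + 1), lam i := by
      calc ((k : ℝ) + 1) * (M (k + 1))⁻¹
          = ∑ _i ∈ Finset.range (k + 1), (M (k + 1))⁻¹ := by
            rw [Finset.sum_const, Finset.card_range, nsmul_eq_mul]; push_cast; ring
        _ ≤ _ := Finset.sum_le_sum h1
    have h3 := mul_le_mul_of_nonneg_left h2 (hMpos k).le
    have h4 : M (k + 1) * (((k : ℝ) + 1) * (M (k + 1))⁻¹) = (k : ℝ) + 1 := by
      field_simp
      exact div_self (hMpos k).ne'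
    linarith
  -- one-step recursion
  have hrec : ∀ n : ℕ,
      ψ n (z n) + lam n * (f (x n) + g n (z n - x n))
        - lam n ^ 2 * ‖g n‖ ^ 2 / (2 * σ * β n) ≤ ψ (n + 1) (z (n + 1)) := by
    intro n
    have h2 := hP2 n (z (n + 1)) (hzQ (n + 1))
    have hb := hBreg (z n) (hzQ n) (z (n + 1)) (hzQ (n + 1))
    have hb' : β n * (σ / 2 * ‖z (n + 1) - z n‖ ^ 2)
        ≤ β n * (d (z (n + 1)) - d (z n) - d' (z n) (z (n + 1) - z n)) :=
      mul_le_mul_of_nonneg_left hb (hβpos n).le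
    have hmono : β n * d (z (n + 1)) ≤ β (n + 1) * d (z (n + 1)) :=
      mul_le_mul_of_nonneg_right (hβmono n) (hd_nonneg _ (hzQ _))
    have hsplit : g n (z (n + 1) - x n) = g n (z n - x n) + g n (z (n + 1) - z n) := by
      rw [← map_add]; congr 1; abel
    have hcs : -(‖g n‖ * ‖z (n + 1) - z n‖) ≤ g n (z (n + 1) - z n) := by
      have h := (g n).le_opNorm (z (n + 1) - z n)
      have habs : |g n (z (n + 1) - z n)| ≤ ‖g n‖ * ‖z (n + 1) - z n‖ := by
        rw [← Real.norm_eq_abs]; exact h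
      linarith [neg_abs_le (g n (z (n + 1) - z n))]
    have hcs' : lam n * -(‖g n‖ * ‖z (n + 1) - z n‖) ≤ lam n * g n (z (n + 1) - z n) :=
      mul_le_mul_of_nonneg_left hcs (hlam n).le
    have hpos : 0 < 2 * σ * β n := mul_pos (by linarith) (hβpos n)
    have hy : lam n ^ 2 * ‖g n‖ ^ 2 / (2 * σ * β n) * (2 * σ * β n)
        = lam n ^ 2 * ‖g n‖ ^ 2 := div_mul_cancel₀ _ hpos.ne'
    have hyoung : -(lam n ^ 2 * ‖g n‖ ^ 2 / (2 * σ * β n))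
        ≤ lam n * -(‖g n‖ * ‖z (n + 1) - z n‖) + β n * (σ / 2 * ‖z (n + 1) - z n‖ ^ 2) := by
      nlinarith [sq_nonneg (σ * β n * ‖z (n + 1) - z n‖ - lam n * ‖g n‖), hpos, hy]
    rw [hsplit] at h2
    nlinarith [h2, hb', hmono, hcs', hyoung]
  -- lower bound on ψ along the iterates
  have hlow : ∀ k : ℕ,
      ∑ n ∈ Finset.range (k + 1),
        (lam n * (f (x n) + g n (z n - x n)) - lam n ^ 2 * ‖g n‖ ^ 2 / (2 * σ * β n))
      ≤ ψ (k + 1) (z (k + 1)) := by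
    intro k
    induction k with
    | zero =>
      have h := hrec 0
      rw [hP1a] at h
      simpa using h
    | succ m ih =>
      rw [Finset.sum_range_succ]
      linarith [hrec (m + 1)]
  -- upper bound on ψ via x*
  have hupp : ∀ k : ℕ, ψ (k + 1) (z (k + 1))
      ≤ (∑ i ∈ Finset.range (k + 1), lam i) * f xs
        + β (k + 1) * (d (z (k + 1)) + d' (z (k + 1)) (xs - z (k + 1))) := by
    intro k
    have h3 := hP3 k xs hxsQ
    have hsum : ∑ i ∈ Finset.range (k + 1), lam i * (f (x i) + g i (xs - x i))
        ≤ ∑ i ∈ Finset.range (k + 1), lam i * f xs :=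
      Finset.sum_le_sum fun i _ => mul_le_mul_of_nonneg_left (hg i xs) (hlam i).le
    rw [← Finset.sum_mul] at hsum
    linarith
  -- convex-combination membership helper
  have havg_mem : ∀ (s : Set E), Convex ℝ s → ∀ (p : ℕ → E) (k : ℕ), (∀ i, i ≤ k → p i ∈ s) →
      ((∑ i ∈ Finset.range (k + 1), lam i)⁻¹ • ∑ i ∈ Finset.range (k + 1), lam i • p i) ∈ s := by
    intro s hs p k hp
    have h := hs.centerMass_mem (t := Finset.range (k + 1)) (w := lam) (z := p)
      (fun i _ => (hlam i).le) (hSpos k)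
      (fun i hi => hp i (Finset.mem_range_succ_iff.mp hi))
    simpa [Finset.centerMass] using h
  have hxhatQ : ∀ k, xhat k ∈ Q := by
    intro k
    rcases hmethod with ⟨hxz, hxh⟩ | ⟨hxa, hxh⟩
    · rw [hxh k]; exact havg_mem Q hQcv x k (fun i _ => hxQ i)
    · rw [hxh k]; exact hxQ k
  -- Jensen / averaging step
  have hjensen : ∀ k, (∑ i ∈ Finset.range (k + 1), lam i) * f (xhat k)
      ≤ ∑ n ∈ Finset.range (k + 1), lam n * (f (x n) + g n (z n - x n)) := by
    intro k
    rcases hmethod with ⟨hxz, hxh⟩ | ⟨hxa, hxh⟩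
    · -- variant (a)
      have hxh' : xhat k = (Finset.range (k + 1)).centerMass lam x := by
        rw [hxh k]; rfl
      have hcm := hf_cv.map_centerMass_le (t := Finset.range (k + 1))
        (fun i _ => (hlam i).le) (hSpos k) (fun i _ => hxQ i)
      have hcmval : (Finset.range (k + 1)).centerMass lam (f ∘ x)
          = (∑ i ∈ Finset.range (k + 1), lam i)⁻¹
            * ∑ i ∈ Finset.range (k + 1), lam i * f (x i) := by
        simp [Finset.centerMass, smul_eq_mul]
      rw [hcmval] at hcm
      have hTeq : ∑ n ∈ Finset.range (k + 1), lam n * (f (x n) + g n (z n - x n))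
          = ∑ i ∈ Finset.range (k + 1), lam i * f (x i) :=
        Finset.sum_congr rfl (fun n _ => by rw [← hxz n]; simp)
      rw [hxh', hTeq]
      calc (∑ i ∈ Finset.range (k + 1), lam i) * f ((Finset.range (k + 1)).centerMass lam x)
          ≤ (∑ i ∈ Finset.range (k + 1), lam i) *
              ((∑ i ∈ Finset.range (k + 1), lam i)⁻¹
                * ∑ i ∈ Finset.range (k + 1), lam i * f (x i)) :=
            mul_le_mul_of_nonneg_left hcm (hSpos k).le
        _ = ∑ i ∈ Finset.range (k + 1), lam i * f (x i) := by
            rw [← mul_assoc, mul_inv_cancel₀ (hSpos k).ne', one_mul]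
    · -- variant (b)
      have hSx : ∀ n, (∑ i ∈ Finset.range (n + 1), lam i) • x n
          = ∑ i ∈ Finset.range (n + 1), lam i • z i := by
        intro n; rw [hxa n, smul_inv_smul₀ (hSpos n).ne']
      have main : ∀ k, (∑ i ∈ Finset.range (k + 1), lam i) * f (x k)
          ≤ ∑ n ∈ Finset.range (k + 1), lam n * (f (x n) + g n (z n - x n)) := by
        intro k
        induction k with
        | zero =>
          have hx0 : x 0 = z 0 := by
            rw [hxa 0]
            simp [inv_smul_smul₀ (hlam 0).ne']
          simp [Finset.sum_range_one, hx0]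
        | succ m ih =>
          have h1 := hSx m
          have h2 := hSx (m + 1)
          rw [Finset.sum_range_succ (f := fun i => lam i • z i) (n := m + 1),
            Finset.sum_range_succ (f := lam) (n := m + 1), add_smul] at h2
          have h2' : (∑ i ∈ Finset.range (m + 1), lam i) • x (m + 1)
              = ∑ i ∈ Finset.range (m + 1), lam i • z i
                + lam (m + 1) • z (m + 1) - lam (m + 1) • x (m + 1) := by
            rw [eq_sub_iff_add_eq]
            exact h2
          have hvec : (∑ i ∈ Finset.range (m + 1), lam i) • (x m - x (m + 1))
              = lam (m + 1) • (x (m + 1) - z (m + 1)) := by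
            rw [smul_sub, h1, h2', smul_sub]
            abel
          have hsc : (∑ i ∈ Finset.range (m + 1), lam i) * (g (m + 1) (x m - x (m + 1)))
              = lam (m + 1) * (g (m + 1) (x (m + 1) - z (m + 1))) := by
            rw [← smul_eq_mul, ← smul_eq_mul, ← map_smul, ← map_smul, hvec]
          have hgstep := hg (m + 1) (x m)
          have hmul := mul_le_mul_of_nonneg_left hgstep (hSpos m).le
          have hgg : g (m + 1) (z (m + 1) - x (m + 1))
              = -g (m + 1) (x (m + 1) - z (m + 1)) := by
            rw [← map_neg]; congr 1; abel
          rw [Finset.sum_range_succ, Finset.sum_range_succ (f := fun n =>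
            lam n * (f (x n) + g n (z n - x n))), hgg]
          nlinarith [ih, hmul, hsc]
      rw [hxh k]
      exact main k
  -- value of error sum
  have hErrSum : ∀ k, ∑ n ∈ Finset.range (k + 1), lam n ^ 2 * ‖g n‖ ^ 2 / (2 * σ * β n)
      = ρ / (2 * Real.sqrt σ) * bhat (k + 1) := by
    intro k
    have hterm : ∀ n, lam n ^ 2 * ‖g n‖ ^ 2 / (2 * σ * β n)
        = ρ / (2 * Real.sqrt σ) * (bhat n)⁻¹ := by
      intro n
      have h1 : lam n ^ 2 * ‖g n‖ ^ 2 = 1 := by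
        rw [hlamw n, inv_pow]
        exact inv_mul_cancel₀ (pow_ne_zero 2 (hgn n).ne')
      rw [h1, hβ n]
      have hss : Real.sqrt σ * Real.sqrt σ = σ := Real.mul_self_sqrt hσ.le
      have hb0 : bhat n ≠ 0 := (hbpos n).ne'
      have hρ0 : ρ ≠ 0 := hρ.ne'
      have hσs0 : Real.sqrt σ ≠ 0 := hσs.ne'
      field_simp
      linear_combination hss
    calc ∑ n ∈ Finset.range (k + 1), lam n ^ 2 * ‖g n‖ ^ 2 / (2 * σ * β n)
        = ∑ n ∈ Finset.range (k + 1), ρ / (2 * Real.sqrt σ) * (bhat n)⁻¹ :=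
          Finset.sum_congr rfl fun n _ => hterm n
      _ = ρ / (2 * Real.sqrt σ) * ∑ n ∈ Finset.range (k + 1), (bhat n)⁻¹ := by
          rw [Finset.mul_sum]
      _ = ρ / (2 * Real.sqrt σ) * bhat (k + 1) := by rw [hsumInv k]
  -- key inequality
  have hkey : ∀ k : ℕ, (∑ i ∈ Finset.range (k + 1), lam i) * (f (xhat k) - f xs)
      ≤ bhat (k + 1) / Real.sqrt σ
        * ((d (z (k + 1)) + d' (z (k + 1)) (xs - z (k + 1))) / ρ + ρ / 2) := by
    intro k
    have h1 := hjensen k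
    have h2 := hlow k
    rw [Finset.sum_sub_distrib] at h2
    have h3 := hupp k
    have h4 := hErrSum k
    have heq : β (k + 1) * (d (z (k + 1)) + d' (z (k + 1)) (xs - z (k + 1)))
        + ρ / (2 * Real.sqrt σ) * bhat (k + 1)
        = bhat (k + 1) / Real.sqrt σ
          * ((d (z (k + 1)) + d' (z (k + 1)) (xs - z (k + 1))) / ρ + ρ / 2) := by
      rw [hβ (k + 1)]
      field_simp
    nlinarith [h1, h2, h3, h4, heq]
  have hX : ∀ k : ℕ,
      0 ≤ (d (z (k + 1)) + d' (z (k + 1)) (xs - z (k + 1))) / ρ + ρ / 2 := by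
    intro k
    have h0 : 0 ≤ (∑ i ∈ Finset.range (k + 1), lam i) * (f (xhat k) - f xs) :=
      mul_nonneg (hSpos k).le (sub_nonneg.mpr (hxs_opt _ (hxhatQ k)))
    have h1 := le_trans h0 (hkey k)
    have hc : 0 < bhat (k + 1) / Real.sqrt σ := div_pos (hbpos (k + 1)) hσs
    by_contra h
    push_neg at h
    nlinarith [h1, hc]
  -- PART 2 preliminaries: bound for z n
  have hd'0 : 0 ≤ d' x₀ (xs - x₀) := by
    have hmin : IsMinOn d Q x₀ := by
      apply isMinOn_iff.mpr
      intro u hu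
      rw [hdx₀]
      exact hd_nonneg u hu
    refine hmin.localize.hasFDerivWithinAt_nonneg (hd_diff x₀ hx₀Q) ?_
    apply mem_posTangentConeAt_of_segment_subset
    rw [add_sub_cancel]
    exact hQcv.segment_subset hx₀Q hxsQ
  have hz2 : ∀ n, ‖z n - xs‖ ^ 2 ≤ (2 * d xs + ρ ^ 2) / σ := by
    intro n
    cases n with
    | zero =>
      have hb := hBreg x₀ hx₀Q xs hxsQ
      rw [hdx₀] at hb
      rw [hP1b, norm_sub_rev, le_div_iff₀ hσ]
      nlinarith [sq_nonneg ρ, hd'0]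
    | succ m =>
      have hXm := hX m
      have hb := hBreg (z (m + 1)) (hzQ (m + 1)) xs hxsQ
      have hdivmul : (d (z (m + 1)) + d' (z (m + 1)) (xs - z (m + 1))) / ρ * ρ
          = d (z (m + 1)) + d' (z (m + 1)) (xs - z (m + 1)) :=
        div_mul_cancel₀ _ hρ.ne'
      have hl : -(ρ ^ 2 / 2) ≤ d (z (m + 1)) + d' (z (m + 1)) (xs - z (m + 1)) := by
        nlinarith [mul_nonneg hXm hρ.le, hdivmul]
      rw [norm_sub_rev, le_div_iff₀ hσ]
      nlinarith [hb, hl]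
  have hr2nn : 0 ≤ (2 * d xs + ρ ^ 2) / σ := by
    have hdxs := hd_nonneg xs hxsQ
    apply div_nonneg _ hσ.le
    nlinarith
  set r := Real.sqrt ((2 * d xs + ρ ^ 2) / σ) with hr_def
  have hball : ∀ v : E, ‖v - xs‖ ≤ r ↔ ‖v - xs‖ ^ 2 ≤ (2 * d xs + ρ ^ 2) / σ :=
    fun v => Real.le_sqrt (norm_nonneg _) hr2nn
  have hKcv : Convex ℝ (Q ∩ Metric.closedBall xs r) :=
    hQcv.inter (convex_closedBall _ _)
  have hzK : ∀ n, z n ∈ Q ∩ Metric.closedBall xs r := by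
    intro n
    refine ⟨hzQ n, ?_⟩
    rw [Metric.mem_closedBall, dist_eq_norm]
    exact (hball _).mpr (hz2 n)
  have hxK : ∀ n, x n ∈ Q ∩ Metric.closedBall xs r := by
    intro n
    rcases hmethod with ⟨hxz, hxh⟩ | ⟨hxa, hxh⟩
    · rw [hxz n]; exact hzK n
    · rw [hxa n]; exact havg_mem _ hKcv z n (fun i _ => hzK i)
  have hxhatK : ∀ n, xhat n ∈ Q ∩ Metric.closedBall xs r := by
    intro n
    rcases hmethod with ⟨hxz, hxh⟩ | ⟨hxa, hxh⟩
    · rw [hxh n]; exact havg_mem _ hKcv x n (fun i _ => hxK i)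
    · rw [hxh n]; exact hxK n
  have hKprop : ∀ v : E, v ∈ Q ∩ Metric.closedBall xs r →
      v ∈ Q ∧ ‖v - xs‖ ^ 2 ≤ (2 * d xs + ρ ^ 2) / σ := by
    intro v hv
    refine ⟨hv.1, ?_⟩
    apply (hball v).mp
    rw [← dist_eq_norm]
    exact Metric.mem_closedBall.mp hv.2
  constructor
  · -- part 1
    intro k
    have hkey' := hkey k
    have hXk := hX k
    have hS := hSpos k
    have hk1 : (0 : ℝ) < (k : ℝ) + 1 := by positivity
    have hbub := (hbb k).2
    have hbl : 1 ≤ bhat (k + 1) := hb1 k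
    have hMp := hMpos k
    have hSMk := hSM k
    set X := (d (z (k + 1)) + d' (z (k + 1)) (xs - z (k + 1))) / ρ + ρ / 2 with hX_def
    set B := 0.5 + Real.sqrt (2 * (k : ℝ) + 1) with hB_def
    set S := ∑ i ∈ Finset.range (k + 1), lam i with hS_def
    clear_value X B S
    -- cleared form of key inequality
    have hkey2 : Real.sqrt σ * (S * (f (xhat k) - f xs)) ≤ bhat (k + 1) * X := by
      have h := mul_le_mul_of_nonneg_left hkey' hσs.le
      have heq2 : Real.sqrt σ * (bhat (k + 1) / Real.sqrt σ * X) = bhat (k + 1) * X := by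
        field_simp
      linarith [h, heq2.le, heq2.ge]
    have hgoal_eq : M (k + 1) * (1 / Real.sqrt σ) * X * (B / ((k : ℝ) + 1))
        = M (k + 1) * X * B / (Real.sqrt σ * ((k : ℝ) + 1)) := by
      field_simp
      try ring
    rw [hgoal_eq, le_div_iff₀ (by positivity)]
    have hBnn : 0 ≤ B := le_trans (by linarith) hbub
    rcases le_or_gt 0 (f (xhat k) - f xs) with hΔ | hΔ
    · -- Δ ≥ 0
      have c1 : (f (xhat k) - f xs) * (Real.sqrt σ * ((k : ℝ) + 1))
          ≤ (f (xhat k) - f xs) * (Real.sqrt σ * (M (k + 1) * S)) := by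
        apply mul_le_mul_of_nonneg_left _ hΔ
        exact mul_le_mul_of_nonneg_left hSMk hσs.le
      have c2 : (f (xhat k) - f xs) * (Real.sqrt σ * (M (k + 1) * S))
          = M (k + 1) * (Real.sqrt σ * (S * (f (xhat k) - f xs))) := by ring
      have c3 : M (k + 1) * (Real.sqrt σ * (S * (f (xhat k) - f xs)))
          ≤ M (k + 1) * (bhat (k + 1) * X) :=
        mul_le_mul_of_nonneg_left hkey2 hMp.le
      have c4 : M (k + 1) * (bhat (k + 1) * X) ≤ M (k + 1) * (B * X) := by
        apply mul_le_mul_of_nonneg_left _ hMp.le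
        exact mul_le_mul_of_nonneg_right hbub hXk
      nlinarith [c1, c2.le, c3, c4]
    · -- Δ < 0
      have : (f (xhat k) - f xs) * (Real.sqrt σ * ((k : ℝ) + 1)) ≤ 0 := by
        apply mul_nonpos_of_nonpos_of_nonneg hΔ.le
        positivity
      have hrhs : 0 ≤ M (k + 1) * X * B := by positivity
      linarith
  · -- part 2
    intro n
    exact ⟨hKprop _ (hzK n), hKprop _ (hxK n), hKprop _ (hxhatK n)⟩
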